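/- Let n ≥ 1, let α, β > 0 with α + β < 1, set c = 1 − α − β and γ = β/(α + β), and let Ã₁, …, Ã_T be n×n real row-stochastic matrices. For each t define ℒ_t = I − c·Ã_tᵀ and the RWR kernel L_t = (α + β)·ℒ_t⁻¹, and for j ≥ i define the product L_{j⇜i} = L_j · L_{j−1} ⋯ L_i (so L_{i⇜i} = L_i). Define X₀ = I and X_t = α·ℒ_t⁻¹ + β·ℒ_t⁻¹·X_{t−1} for t ≥ 1. Then for every t ≥ 1, X_t = (1 − γ)·Σ_{i=0}^{t−2} γ^i · L_{t⇜t−i} + γ^{t−1} · L_{t⇜1} (for t = 1 the sum is empty and X₁ = L₁). -/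

import Mathlib

open Matrix BigOperators Finset

def RowStochastic {n : ℕ} (A : Matrix (Fin n) (Fin n) ℝ) : Prop :=
  (∀ i j, 0 ≤ A i j) ∧ ∀ i, ∑ j, A i j = 1

/-- The product `L j * L (j-1) * ⋯ * L i` (for `i ≤ j`; in particular
`chainProd L i i = L i`). -/
def chainProd {n : ℕ} (L : ℕ → Matrix (Fin n) (Fin n) ℝ) (j i : ℕ) :
    Matrix (Fin n) (Fin n) ℝ :=
  (((List.range (j + 1 - i)).map (fun k => L (j - k))).prod)

lemma chain_self {n : ℕ} (L : ℕ → Matrix (Fin n) (Fin n) ℝ) (j : ℕ) :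
    chainProd L j j = L j := by
  simp [chainProd, List.range_succ]

lemma chain_succ {n : ℕ} (L : ℕ → Matrix (Fin n) (Fin n) ℝ) (j i : ℕ)
    (h : i ≤ j + 1) : chainProd L (j + 1) i = L (j + 1) * chainProd L j i := by
  have h1 : j + 1 + 1 - i = (j + 1 - i) + 1 := by omega
  rw [chainProd, chainProd, h1, List.range_succ_eq_map]
  simp only [List.map_cons, List.map_map, List.prod_cons, Nat.sub_zero]
  congr 1
  apply congrArg
  apply List.map_congr_left
  intro k hk
  show L (j + 1 - (k+1)) = L (j - k)
  rw [Nat.succ_sub_succ]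


theorem stmt_3 (n : ℕ) (hn : 1 ≤ n) (α β : ℝ) (hα : 0 < α) (hβ : 0 < β)
    (hαβ : α + β < 1) (c γ : ℝ) (hc : c = 1 - α - β) (hγ : γ = β / (α + β))
    (T : ℕ) (A : ℕ → Matrix (Fin n) (Fin n) ℝ)
    (hA : ∀ t, 1 ≤ t → t ≤ T → RowStochastic (A t))
    (L : ℕ → Matrix (Fin n) (Fin n) ℝ)
    (hL : ∀ t, L t = 1 - c • (A t)ᵀ)
    (Lr : ℕ → Matrix (Fin n) (Fin n) ℝ)
    (hLr : ∀ t, Lr t = (α + β) • (L t)⁻¹)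
    (X : ℕ → Matrix (Fin n) (Fin n) ℝ)
    (hX0 : X 0 = 1)
    (hXt : ∀ t, 1 ≤ t → t ≤ T → X t = α • (L t)⁻¹ + β • ((L t)⁻¹ * X (t - 1))) :
    ∀ t, 1 ≤ t → t ≤ T →
      X t = (1 - γ) • (∑ i ∈ Finset.range (t - 1), γ ^ i • chainProd Lr t (t - i))
            + γ ^ (t - 1) • chainProd Lr t 1 := by
  have hs : (0:ℝ) < α + β := by linarith
  have hγ1 : (1 - γ) * (α + β) = α := by rw [hγ]; field_simp; ring
  have hγ2 : γ * (α + β) = β := by rw [hγ]; field_simp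
  have key : ∀ t, 1 ≤ t → t ≤ T →
      X t = (1 - γ) • Lr t + γ • (Lr t * X (t - 1)) := by
    intro t h1 h2
    rw [hXt t h1 h2, hLr t, smul_smul, hγ1, smul_mul_assoc, smul_smul, hγ2]
  intro t ht1
  induction t, ht1 using Nat.le_induction with
  | base =>
    intro hT
    rw [key 1 le_rfl hT]
    simp [chain_self, hX0, ← add_smul]
  | succ m hm ih =>
    intro hT
    have hmT : m ≤ T := by omega
    obtain ⟨p, rfl⟩ : ∃ p, m = p + 1 := ⟨m - 1, by omega⟩
    simp only [show p + 1 + 1 = p + 2 from rfl] at hT ⊢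
    have ihm := ih hmT
    simp only [Nat.add_sub_cancel] at ihm
    rw [key (p + 2) (by omega) hT]
    have h2 : p + 2 - 1 = p + 1 := rfl
    rw [h2, ihm, Matrix.mul_add, Matrix.mul_smul, Matrix.mul_smul,
      Finset.mul_sum]
    simp only [Matrix.mul_smul]
    have hch : ∀ x : ℕ, Lr (p + 2) * chainProd Lr (p + 1) (p + 1 - x)
        = chainProd Lr (p + 2) (p + 1 - x) := fun x =>
      (chain_succ Lr (p + 1) (p + 1 - x) (by omega)).symm
    have hch1 : Lr (p + 2) * chainProd Lr (p + 1) 1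
        = chainProd Lr (p + 2) 1 := (chain_succ Lr (p + 1) 1 (by omega)).symm
    simp only [hch, hch1]
    rw [Finset.sum_range_succ']
    simp only [Nat.succ_sub_succ, Nat.sub_zero, pow_zero, one_smul, chain_self]
    have hps : ∀ i ∈ Finset.range p, γ ^ (i + 1) • chainProd Lr (p + 2) (p + 1 - i)
        = γ • (γ ^ i • chainProd Lr (p + 2) (p + 1 - i)) := by
      intro i _
      rw [smul_smul, pow_succ']
    rw [Finset.sum_congr rfl hps, ← Finset.smul_sum, pow_succ]
    set S := ∑ i ∈ Finset.range p, γ ^ i • chainProd Lr (p + 2) (p + 1 - i)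
    set C := chainProd Lr (p + 2) 1
    set M := Lr (p + 2)
    module
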